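/- Let f be a polynomial with complex coefficients, 0 < a < b < ∞, and let φ : (a, b) → ℝ be continuous with Im f(s·exp(i φ(s))) = 0 for all s ∈ (a, b). Suppose φ(s) converges to some t* ∈ ℝ as s → b⁻, and suppose Im α* ≠ 0 where α* = i·b·exp(i t*)·f′(b·exp(i t*)). Then there exist ε > 0 and a continuous function φ̃ : (a, b + ε) → ℝ extending φ such that Im f(s·exp(i φ̃(s))) = 0 for all s ∈ (a, b + ε). (A crossing-point function can be extended past its right endpoint unless the curve f_b is tangent to the real axis there.) -/

import Mathlib

open Complex Filter Set Topology

theorem crossing_extends_past_endpoint (f : Polynomial ℂ) (a b : ℝ) (ha : 0 < a) (hab : a < b)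
    (φ : ℝ → ℝ) (hφ : ContinuousOn φ (Set.Ioo a b))
    (him : ∀ s ∈ Set.Ioo a b, (f.eval ((s : ℂ) * Complex.exp (Complex.I * φ s))).im = 0)
    (tstar : ℝ) (hlim : Filter.Tendsto φ (nhdsWithin b (Set.Iio b)) (nhds tstar))
    (αstar : ℂ)
    (hαstar : αstar = Complex.I * b * Complex.exp (Complex.I * tstar) *
        f.derivative.eval ((b : ℂ) * Complex.exp (Complex.I * tstar)))
    (hαim : αstar.im ≠ 0) :
    ∃ ε > (0 : ℝ), ∃ φext : ℝ → ℝ,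
      ContinuousOn φext (Set.Ioo a (b + ε)) ∧
      (∀ s ∈ Set.Ioo a b, φext s = φ s) ∧
      (∀ s ∈ Set.Ioo a (b + ε),
        (f.eval ((s : ℂ) * Complex.exp (Complex.I * φext s))).im = 0) := by
  have hb : (0:ℝ) < b := ha.trans hab
  set z₀ : ℂ := (b : ℂ) * Complex.exp (Complex.I * tstar) with hz₀def
  have hz₀abs : ‖z₀‖ = b := by
    simp [hz₀def, Complex.norm_exp, abs_of_pos hb]
  have hz₀ne : z₀ ≠ 0 := by
    intro h; rw [h] at hz₀abs; simp at hz₀abs; linarith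
  set F : ℂ → ℂ := fun z => f.eval z with hFdef
  set D : ℂ := f.derivative.eval z₀ with hDdef
  -- key nonvanishing
  have key : (z₀ * D).re ≠ 0 := by
    have h1 : αstar = Complex.I * (z₀ * D) := by rw [hαstar]; ring
    intro h0
    apply hαim
    rw [h1, Complex.mul_im, Complex.I_re, Complex.I_im]
    simp [h0]
  have hD : D ≠ 0 := by intro h; apply key; rw [h]; simp
  -- inverse function for F
  have hF' : HasStrictDerivAt F D z₀ := f.hasStrictDerivAt z₀
  set Φ := (hF'.hasStrictFDerivAt_equiv hD).toOpenPartialHomeomorph F with hΦdef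
  set g : ℂ → ℂ := hF'.localInverse F D z₀ hD with hgdef
  have hΦcoe : (Φ : ℂ → ℂ) = F :=
    (hF'.hasStrictFDerivAt_equiv hD).toOpenPartialHomeomorph_coe
  have hgΦ : g = Φ.symm := rfl
  have hz₀src : z₀ ∈ Φ.source :=
    (hF'.hasStrictFDerivAt_equiv hD).mem_toOpenPartialHomeomorph_source
  have hw₀tgt : F z₀ ∈ Φ.target :=
    (hF'.hasStrictFDerivAt_equiv hD).image_mem_toOpenPartialHomeomorph_target
  have hgF : g (F z₀) = z₀ :=
    (hF'.hasStrictFDerivAt_equiv hD).localInverse_apply_image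
  have hFg : ∀ w ∈ Φ.target, F (g w) = w := by
    intro w hw
    have := Φ.right_inv hw
    rwa [hΦcoe] at this
  -- Im (F z₀) = 0
  have hFcont : Continuous F := f.continuous
  have htend : Tendsto (fun s : ℝ => (s : ℂ) * Complex.exp (Complex.I * φ s))
      (nhdsWithin b (Set.Iio b)) (nhds z₀) := by
    apply Filter.Tendsto.mul
    · exact (Complex.continuous_ofReal.tendsto b).mono_left nhdsWithin_le_nhds
    · have hc : Continuous fun t : ℝ => Complex.exp (Complex.I * t) := by continuity
      exact (hc.tendsto tstar).comp hlim
  have him0 : (F z₀).im = 0 := by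
    have h1 : Tendsto (fun s : ℝ => (f.eval ((s : ℂ) * Complex.exp (Complex.I * φ s))).im)
        (nhdsWithin b (Set.Iio b)) (nhds (F z₀).im) :=
      (Complex.continuous_im.tendsto _).comp ((hFcont.tendsto _).comp htend)
    have h2 : Tendsto (fun s : ℝ => (f.eval ((s : ℂ) * Complex.exp (Complex.I * φ s))).im)
        (nhdsWithin b (Set.Iio b)) (nhds 0) := by
      apply Tendsto.congr' _ tendsto_const_nhds
      filter_upwards [Ioo_mem_nhdsLT_of_mem (by constructor <;> [exact hab; rfl] :
        b ∈ Set.Ioc a b)] with s hs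
      exact (him s hs).symm
    exact tendsto_nhds_unique h1 h2
  set w₀ : ℝ := (F z₀).re with hw₀def
  have hw₀C : ((w₀ : ℝ) : ℂ) = F z₀ := by
    apply Complex.ext <;> simp [hw₀def, him0]
  -- real function h and its strict derivative
  set h : ℝ → ℝ := fun x => (g x).re * (g x).re + (g x).im * (g x).im with hhdef
  have hg' : HasStrictDerivAt g D⁻¹ ((w₀ : ℝ) : ℂ) := by
    rw [hw₀C]; exact hF'.to_localInverse hD
  have hre : HasStrictDerivAt (fun x : ℝ => (g x).re) (D⁻¹).re w₀ := hg'.real_of_complex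
  have him' : HasStrictDerivAt (fun x : ℝ => (g x).im) (D⁻¹).im w₀ := by
    have h1 : HasStrictDerivAt (fun z : ℂ => -Complex.I * g z) (-Complex.I * D⁻¹)
        ((w₀ : ℝ) : ℂ) := hg'.const_mul _
    have h2 := h1.real_of_complex
    have e1 : (fun x : ℝ => (-Complex.I * g x).re) = fun x : ℝ => (g x).im := by
      funext x; simp [Complex.mul_re]
    have e2 : (-Complex.I * D⁻¹).re = (D⁻¹).im := by simp [Complex.mul_re]
    rwa [e1, e2] at h2
  set h' : ℝ := ((D⁻¹).re * (g w₀).re + (g w₀).re * (D⁻¹).re) +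
      ((D⁻¹).im * (g w₀).im + (g w₀).im * (D⁻¹).im) with hh'def
  have hh : HasStrictDerivAt h h' w₀ := (hre.mul hre).add (him'.mul him')
  have hgw₀ : g ((w₀ : ℝ) : ℂ) = z₀ := by rw [hw₀C]; exact hgF
  have hnsq : Complex.normSq D ≠ 0 := by
    simpa [Complex.normSq_eq_zero] using hD
  have gen : ∀ z : ℂ, (D⁻¹.re * z.re + z.re * D⁻¹.re) + (D⁻¹.im * z.im + z.im * D⁻¹.im) =
      2 * (z * D).re / Complex.normSq D := by
    intro z
    rw [Complex.inv_re, Complex.inv_im, Complex.mul_re]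
    field_simp
    ring
  have hh'val : h' = 2 * (z₀ * D).re / Complex.normSq D := by
    rw [hh'def, hgw₀]
    exact gen z₀
  have hh'ne : h' ≠ 0 := by
    rw [hh'val]
    exact div_ne_zero (by simpa using key) hnsq
  -- inverse function for h
  set Ψ := (hh.hasStrictFDerivAt_equiv hh'ne).toOpenPartialHomeomorph h with hΨdef
  set k : ℝ → ℝ := hh.localInverse h h' w₀ hh'ne with hkdef
  have hΨcoe : (Ψ : ℝ → ℝ) = h :=
    (hh.hasStrictFDerivAt_equiv hh'ne).toOpenPartialHomeomorph_coe
  have hkΨ : k = Ψ.symm := rfl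
  have hhw₀tgt : h w₀ ∈ Ψ.target :=
    (hh.hasStrictFDerivAt_equiv hh'ne).image_mem_toOpenPartialHomeomorph_target
  have hkh : k (h w₀) = w₀ :=
    (hh.hasStrictFDerivAt_equiv hh'ne).localInverse_apply_image
  have hhk : ∀ y ∈ Ψ.target, h (k y) = y := by
    intro y hy
    have := Ψ.right_inv hy
    rwa [hΨcoe] at this
  have hhw₀ : h w₀ = b * b := by
    rw [hhdef]; simp only [hgw₀]
    have : (z₀.re * z₀.re + z₀.im * z₀.im) = Complex.normSq z₀ := by
      rw [Complex.normSq_apply]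
    rw [this, ← Complex.sq_norm, hz₀abs]; ring
  -- the candidate extension function
  set ψ : ℝ → ℝ := fun u => tstar + Complex.arg (g ((k (u * u) : ℝ) : ℂ) / z₀) with hψdef
  -- eventual good conditions near b
  have hkb : k (b * b) = w₀ := by rw [← hhw₀]; exact hkh
  have E1 : ∀ᶠ s : ℝ in nhds b, s * s ∈ Ψ.target := by
    have hc : ContinuousAt (fun s : ℝ => s * s) b := by fun_prop
    have := hc.preimage_mem_nhds (Ψ.open_target.mem_nhds (hhw₀ ▸ hhw₀tgt))
    filter_upwards [this] with s hs using hs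
  have hkcont : ∀ y ∈ Ψ.target, ContinuousAt k y := by
    intro y hy
    rw [hkΨ]
    exact Ψ.symm.continuousAt (by rwa [Ψ.symm_source])
  have hgcont : ∀ w ∈ Φ.target, ContinuousAt g w := by
    intro w hw
    rw [hgΦ]
    exact Φ.symm.continuousAt (by rwa [Φ.symm_source])
  have E2 : ∀ᶠ s : ℝ in nhds b, ((k (s * s) : ℝ) : ℂ) ∈ Φ.target := by
    have hc : ContinuousAt (fun s : ℝ => ((k (s * s) : ℝ) : ℂ)) b := by
      apply Complex.continuous_ofReal.continuousAt.comp
      exact ((hkcont _ (hhw₀ ▸ hhw₀tgt)).comp (by fun_prop : ContinuousAt (fun s : ℝ => s * s) b))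
    have hval : ((k (b * b) : ℝ) : ℂ) ∈ Φ.target := by rw [hkb, hw₀C]; exact hw₀tgt
    have := hc.preimage_mem_nhds (Φ.open_target.mem_nhds hval)
    filter_upwards [this] with s hs using hs
  have E3 : ∀ᶠ s : ℝ in nhds b, g ((k (s * s) : ℝ) : ℂ) / z₀ ∈ Complex.slitPlane := by
    have hc : ContinuousAt (fun s : ℝ => g ((k (s * s) : ℝ) : ℂ) / z₀) b := by
      apply ContinuousAt.div_const
      apply (hgcont _ (by rw [hkb, hw₀C]; exact hw₀tgt)).comp
      apply Complex.continuous_ofReal.continuousAt.comp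
      exact ((hkcont _ (hhw₀ ▸ hhw₀tgt)).comp (by fun_prop : ContinuousAt (fun s : ℝ => s * s) b))
    have hval : g ((k (b * b) : ℝ) : ℂ) / z₀ ∈ Complex.slitPlane := by
      rw [hkb, hgw₀, div_self hz₀ne]
      exact Complex.one_mem_slitPlane
    have := hc.preimage_mem_nhds (Complex.isOpen_slitPlane.mem_nhds hval)
    filter_upwards [this] with s hs using hs
  have E4 : ∀ᶠ s : ℝ in nhds b, (0:ℝ) < s :=
    eventually_gt_nhds hb
  obtain ⟨δ, hδpos, hδ⟩ := Metric.eventually_nhds_iff.1 (((E1.and E2).and E3).and E4)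
  -- main pointwise lemma
  have main : ∀ s : ℝ, |s - b| < δ →
      (0 < s ∧ ContinuousAt ψ s ∧ (s : ℂ) * Complex.exp (Complex.I * ψ s) =
        g ((k (s * s) : ℝ) : ℂ) ∧
        (f.eval ((s : ℂ) * Complex.exp (Complex.I * ψ s))).im = 0) := by
    intro s hs
    obtain ⟨⟨⟨P1, P2⟩, P3⟩, P4⟩ := hδ (show dist s b < δ by rwa [Real.dist_eq])
    set zs : ℂ := g ((k (s * s) : ℝ) : ℂ) with hzs
    have hnsq : Complex.normSq zs = s * s := by
      have h1 : h (k (s * s)) = s * s := hhk _ P1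
      rw [hhdef] at h1
      rw [Complex.normSq_apply, ← hzs] at *
      exact h1
    have habs : ‖zs‖ = s := by
      rw [Complex.norm_def, hnsq, Real.sqrt_mul_self P4.le]
    have hzsne : zs ≠ 0 := by
      intro h0
      rw [h0] at habs; simp at habs; linarith
    have hfzs : F zs = ((k (s * s) : ℝ) : ℂ) := hFg _ P2
    have hwne : zs / z₀ ≠ 0 := div_ne_zero hzsne hz₀ne
    have habsw : ((‖zs / z₀‖ : ℝ) : ℂ) ≠ 0 := by
      have hval : ‖zs / z₀‖ = s / b := by rw [norm_div, habs, hz₀abs]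
      rw [hval]
      exact_mod_cast (div_pos P4 hb).ne'
    have hexp : Complex.exp ((Complex.arg (zs / z₀) : ℂ) * Complex.I) =
        (zs / z₀) / ((‖zs / z₀‖ : ℝ) : ℂ) := by
      rw [eq_div_iff habsw, mul_comm]
      exact Complex.norm_mul_exp_arg_mul_I _
    have heq : (s : ℂ) * Complex.exp (Complex.I * ψ s) = zs := by
      have hψs : ((ψ s : ℝ) : ℂ) = (tstar : ℂ) + (Complex.arg (zs / z₀) : ℂ) := by
        rw [hψdef]; push_cast; rw [hzs]
      rw [show Complex.I * (ψ s : ℂ) = Complex.I * tstar +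
        ((ψ s : ℂ) - (tstar : ℂ)) * Complex.I by ring]
      rw [hψs]
      rw [show (tstar : ℂ) + (Complex.arg (zs / z₀) : ℂ) - tstar =
        (Complex.arg (zs / z₀) : ℂ) by ring]
      rw [Complex.exp_add, hexp]
      rw [norm_div, habs, hz₀abs]
      have hsne : (s : ℂ) ≠ 0 := by exact_mod_cast P4.ne'
      have hbne : (b : ℂ) ≠ 0 := by exact_mod_cast hb.ne'
      rw [hz₀def]
      push_cast
      field_simp
      try ring
      try exact ⟨P4.ne', hb.ne'⟩
    refine ⟨P4, ?_, heq, ?_⟩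
    · -- continuity of ψ at s
      have c1 : ContinuousAt (fun u : ℝ => u * u) s := by fun_prop
      have c2 : ContinuousAt (fun u : ℝ => k (u * u)) s :=
        ContinuousAt.comp (f := fun u : ℝ => u * u) (hkcont _ P1) c1
      have c3 : ContinuousAt (fun u : ℝ => ((k (u * u) : ℝ) : ℂ)) s :=
        ContinuousAt.comp (f := fun u : ℝ => k (u * u))
          Complex.continuous_ofReal.continuousAt c2
      have c4 : ContinuousAt (fun u : ℝ => g ((k (u * u) : ℝ) : ℂ)) s :=
        ContinuousAt.comp (f := fun u : ℝ => ((k (u * u) : ℝ) : ℂ)) (hgcont _ P2) c3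
      have c5 : ContinuousAt (fun u : ℝ => g ((k (u * u) : ℝ) : ℂ) / z₀) s :=
        c4.div_const z₀
      have c6 : ContinuousAt (fun u : ℝ => Complex.arg (g ((k (u * u) : ℝ) : ℂ) / z₀)) s :=
        ContinuousAt.comp (f := fun u : ℝ => g ((k (u * u) : ℝ) : ℂ) / z₀)
          (Complex.continuousAt_arg P3) c5
      rw [hψdef]
      exact continuousAt_const.add c6
    · rw [heq, show f.eval zs = F zs from rfl, hfzs]
      exact Complex.ofReal_im _
  -- value of ψ at b
  have hψb : ψ b = tstar := by
    rw [hψdef]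
    simp only [hkb, hgw₀]
    rw [div_self hz₀ne, Complex.arg_one, add_zero]
  -- assemble
  refine ⟨δ, hδpos, fun s => if s < b then φ s else ψ s, ?_, ?_, ?_⟩
  · -- continuity
    intro s hs
    rcases lt_trichotomy s b with hsb | hsb | hsb
    · have hmem : Set.Ioo a b ∈ nhds s := (isOpen_Ioo).mem_nhds ⟨hs.1, hsb⟩
      have hc : ContinuousAt φ s := hφ.continuousAt hmem
      have : ContinuousAt (fun u => if u < b then φ u else ψ u) s := by
        apply hc.congr
        filter_upwards [hmem] with u hu
        rw [if_pos hu.2]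
      exact this.continuousWithinAt
    · -- s = b
      rw [hsb]
      have hφextb : (fun u => if u < b then φ u else ψ u) b = tstar := by
        show (if b < b then φ b else ψ b) = tstar
        rw [if_neg (lt_irrefl b), hψb]
      have hleft : ContinuousWithinAt (fun u => if u < b then φ u else ψ u) (Set.Iio b) b := by
        unfold ContinuousWithinAt
        rw [hφextb]
        apply Tendsto.congr' _ hlim
        filter_upwards [self_mem_nhdsWithin] with u hu
        exact (if_pos hu).symm
      have hright : ContinuousWithinAt (fun u => if u < b then φ u else ψ u) (Set.Ici b) b := by
        unfold ContinuousWithinAt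
        rw [hφextb]
        have hψc : ContinuousAt ψ b := (main b (by simpa using hδpos)).2.1
        have ht : Tendsto ψ (nhdsWithin b (Set.Ici b)) (nhds tstar) := by
          rw [← hψb]
          exact hψc.continuousWithinAt
        apply Tendsto.congr' _ ht
        filter_upwards [self_mem_nhdsWithin] with u hu
        exact (if_neg (not_lt.2 hu)).symm
      have hu := hleft.union hright
      rw [Set.Iio_union_Ici, continuousWithinAt_univ] at hu
      exact hu.continuousWithinAt
    · have hmem : Set.Ioo b (b + δ) ∈ nhds s := (isOpen_Ioo).mem_nhds ⟨hsb, hs.2⟩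
      have hψc : ContinuousAt ψ s := by
        refine (main s ?_).2.1
        rw [abs_sub_lt_iff]
        constructor <;> [linarith [hs.2]; linarith]
      have : ContinuousAt (fun u => if u < b then φ u else ψ u) s := by
        apply hψc.congr
        filter_upwards [hmem] with u hu
        rw [if_neg (not_lt.2 hu.1.le)]
      exact this.continuousWithinAt
  · intro s hs
    simp only [if_pos hs.2]
  · intro s hs
    by_cases hsb : s < b
    · simp only [if_pos hsb]
      exact him s ⟨hs.1, hsb⟩
    · simp only [if_neg hsb]
      refine (main s ?_).2.2.2
      push_neg at hsb
      rw [abs_sub_lt_iff]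
      constructor <;> [linarith [hs.2]; linarith]
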